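/- arXiv:1009.3304 — 7 statements merged into one kernel-verified Lean document; each statement's English description precedes it below -/
import Mathlib

section
/- Let n ≥ 2, let i < n, and let h be a Hamiltonian cycle of the hypercube Q_n. Then the number of i-th dimension edges of h whose parity is 0 equals the number of i-th dimension edges of h whose parity is 1. That is, among the edges {v, v + e_i} belonging to h, exactly half have par_{i,n}(v) = 0 and exactly half have par_{i,n}(v) = 1. -/
/-- The `n`-dimensional hypercube graph: vertices are vectors in `Fin n → ZMod 2`,
two vertices adjacent iff they differ in exactly one coordinate. -/
def Q (n : ℕ) : SimpleGraph (Fin n → ZMod 2) where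
  Adj u v := ∃ i : Fin n, v = u + Pi.single i 1
  symm := by
    constructor
    rintro u v ⟨i, rfl⟩
    refine ⟨i, funext fun j => ?_⟩
    by_cases hj : j = i <;> simp [Pi.single_apply, hj]
    · exact (by decide : ∀ a : ZMod 2, a = a + 1 + 1) _
  loopless := by
    constructor
    rintro u ⟨i, hi⟩
    have := congrFun hi i
    simp [Pi.single_apply] at this

/-- `e` is an `i`-th dimension edge of the hypercube. -/
def isDimEdge {n : ℕ} (i : Fin n) (e : Sym2 (Fin n → ZMod 2)) : Prop :=
  ∃ w : Fin n → ZMod 2, e = s(w, w + Pi.single i 1)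

instance {n : ℕ} (i : Fin n) : DecidablePred (isDimEdge i) := fun e =>
  inferInstanceAs (Decidable (∃ w : Fin n → ZMod 2, e = s(w, w + Pi.single i 1)))

/-- The number of `i`-th dimension edges in a closed walk (entry `cᵢ` of the
chromatic vector when the walk is a Hamiltonian cycle). -/
def dimCount {n : ℕ} (i : Fin n) {u : Fin n → ZMod 2} (p : (Q n).Walk u u) : ℕ :=
  p.edges.countP (fun e => decide (isDimEdge i e))

/-- Parity of `v` ignoring the `i`-th coordinate: the number of coordinates
`j ≠ i` with `v j = 1`, modulo 2. -/
def parI {n : ℕ} (i : Fin n) (v : Fin n → ZMod 2) : ZMod 2 :=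
  ∑ j ∈ Finset.univ.erase i, v j

lemma parI_add_single {n : ℕ} (i j : Fin n) (v : Fin n → ZMod 2) :
    parI i (v + Pi.single j 1) = parI i v + (if j = i then 0 else 1) := by
  unfold parI
  simp only [Pi.add_apply]
  rw [Finset.sum_add_distrib, Finset.sum_pi_single']
  by_cases hj : j = i <;> simp [hj, Finset.mem_erase]

lemma parI_add_single_self {n : ℕ} (i : Fin n) (v : Fin n → ZMod 2) :
    parI i (v + Pi.single i 1) = parI i v := by
  simp [parI_add_single]

lemma parI_add_single_ne {n : ℕ} {i j : Fin n} (hj : j ≠ i) (v : Fin n → ZMod 2) :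
    parI i (v + Pi.single j 1) = parI i v + 1 := by
  simp [parI_add_single, hj]

/-- Key equivalence at the level of darts. -/
lemma dart_key {n : ℕ} (i : Fin n) (c : ZMod 2) (d : (Q n).Dart) :
    (∃ w : Fin n → ZMod 2, d.edge = s(w, w + Pi.single i 1) ∧ parI i w = c) ↔
      (parI i d.fst = c ∧ parI i d.snd = c) := by
  obtain ⟨j, hd⟩ : ∃ j : Fin n, d.snd = d.fst + Pi.single j 1 := d.adj
  have hde : d.edge = s(d.fst, d.snd) := rfl
  rw [hde]
  constructor
  · rintro ⟨w, he, hw⟩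
    rw [Sym2.eq_iff] at he
    rcases he with ⟨h1, h2⟩ | ⟨h1, h2⟩
    · subst h1
      exact ⟨hw, by rw [h2, parI_add_single_self]; exact hw⟩
    · refine ⟨?_, ?_⟩
      · rw [h1, parI_add_single_self]; exact hw
      · rw [h2]; exact hw
  · rintro ⟨h1, h2⟩
    by_cases hji : j = i
    · subst hji
      exact ⟨d.fst, by rw [hd], h1⟩
    · exfalso
      rw [hd, parI_add_single_ne hji, h1] at h2
      exact (by decide : ∀ a : ZMod 2, ¬ a + 1 = a) c h2

/-- A list containing each element of a fintype exactly once has `countP p`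
equal to the cardinality of the filtered universe. -/
lemma countP_of_count_one {V : Type*} [Fintype V] [DecidableEq V] (l : List V)
    (hl : ∀ v, l.count v = 1) (p : V → Prop) [DecidablePred p] :
    l.countP (fun v => decide (p v)) = (Finset.univ.filter p).card := by
  have hm : (l : Multiset V) = Finset.univ.val := by
    refine Multiset.ext.mpr fun v => ?_
    rw [Multiset.coe_count, hl v, Multiset.count_univ]
  have h2 : (Finset.univ.filter p).card = Multiset.countP p (Finset.univ.val) :=
    (Multiset.countP_eq_card_filter _ _).symm
  rw [h2, ← hm, Multiset.coe_countP]

lemma countP_ext {α : Type*} (l : List α) {p q : α → Bool} (hpq : ∀ a, p a = q a) :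
    l.countP p = l.countP q := by
  rw [funext hpq]

lemma countP_split {α : Type*} (l : List α) (p q : α → Bool) :
    l.countP p = l.countP (fun a => p a && q a) + l.countP (fun a => p a && !q a) := by
  induction l with
  | nil => simp
  | cons a l ih =>
    by_cases hp : p a <;> by_cases hq : q a <;>
      simp [List.countP_cons, hp, hq, ih] <;> omega

theorem parity_balance (n : ℕ) (hn : 2 ≤ n) (i : Fin n) (u : Fin n → ZMod 2)
    (h : (Q n).Walk u u) (hh : h.IsHamiltonianCycle) :
    h.edges.countP (fun e => decide (∃ w : Fin n → ZMod 2,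
        e = s(w, w + Pi.single i 1) ∧ parI i w = 0)) =
    h.edges.countP (fun e => decide (∃ w : Fin n → ZMod 2,
        e = s(w, w + Pi.single i 1) ∧ parI i w = 1)) := by
  classical
  -- counts over darts
  have hedges : ∀ c : ZMod 2,
      h.edges.countP (fun e => decide (∃ w : Fin n → ZMod 2,
        e = s(w, w + Pi.single i 1) ∧ parI i w = c)) =
      h.darts.countP (fun d => decide (parI i d.fst = c) && decide (parI i d.snd = c)) := by
    intro c
    rw [SimpleGraph.Walk.edges, List.countP_map]
    refine List.countP_congr fun d _ => ?_
    simp only [Function.comp_apply, Bool.and_eq_true, decide_eq_true_eq]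
    exact dart_key i c d
  -- every vertex occurs exactly once as first coordinate of a dart
  have hfst : ∀ v, (h.darts.map (·.fst)).count v = 1 := by
    intro v
    have happ := SimpleGraph.Walk.map_fst_darts_append h
    have hcount : (h.darts.map (·.fst)).count v + [u].count v = h.support.count v := by
      rw [← List.count_append, happ]
    by_cases hv : v = u
    · subst hv
      have h2 : h.support.count v = 2 := hh.count_support_self
      rw [h2] at hcount
      simpa using hcount
    · have h1 : h.support.count v = 1 := hh.support_count_of_ne (Ne.symm hv)
      have h0 : [u].count v = 0 := by
        simp [List.count_singleton, hv, Ne.symm hv]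
      omega
  -- every vertex occurs exactly once as second coordinate of a dart
  have hsnd : ∀ v, (h.darts.map (·.snd)).count v = 1 := by
    intro v
    rw [SimpleGraph.Walk.map_snd_darts,
      ← SimpleGraph.Walk.support_tail_of_not_nil h hh.isCycle.not_nil]
    exact hh.isHamiltonian_tail v
  -- equal sizes of the two parity classes
  obtain ⟨j, hj⟩ : ∃ j : Fin n, j ≠ i := by
    have : Nontrivial (Fin n) := Fin.nontrivial_iff_two_le.mpr hn
    exact exists_ne i
  have hinv : ∀ v : Fin n → ZMod 2, v + Pi.single j 1 + Pi.single j 1 = v := by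
    intro v
    rw [add_assoc, ← Pi.single_add]
    have : (1 : ZMod 2) + 1 = 0 := by decide
    rw [this]
    simp
  have hcard : (Finset.univ.filter fun v : Fin n → ZMod 2 => parI i v = 0).card =
      (Finset.univ.filter fun v : Fin n → ZMod 2 => parI i v = 1).card := by
    refine Finset.card_nbij' (fun v => v + Pi.single j 1) (fun v => v + Pi.single j 1)
      ?_ ?_ ?_ ?_
    · intro v hv
      simp only [Finset.mem_coe, Finset.mem_filter, Finset.mem_univ, true_and] at hv ⊢
      rw [parI_add_single_ne hj, hv]
      decide
    · intro v hv
      simp only [Finset.mem_coe, Finset.mem_filter, Finset.mem_univ, true_and] at hv ⊢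
      rw [parI_add_single_ne hj, hv]
      decide
    · intro v _
      exact hinv v
    · intro v _
      exact hinv v
  -- counts of fst/snd parities over darts
  have hfstcount : h.darts.countP (fun d => decide (parI i d.fst = 0)) =
      (Finset.univ.filter fun v : Fin n → ZMod 2 => parI i v = 0).card := by
    rw [← countP_of_count_one (h.darts.map (·.fst)) hfst (fun v => parI i v = 0),
      List.countP_map]
    rfl
  have hsndcount : h.darts.countP (fun d => decide (parI i d.snd = 1)) =
      (Finset.univ.filter fun v : Fin n → ZMod 2 => parI i v = 1).card := by
    rw [← countP_of_count_one (h.darts.map (·.snd)) hsnd (fun v => parI i v = 1),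
      List.countP_map]
    rfl
  -- ZMod 2 booleans
  have hbool : ∀ a : ZMod 2, (!decide (a = 1)) = decide (a = 0) := by decide
  have hbool' : ∀ a : ZMod 2, (!decide (a = 0)) = decide (a = 1) := by decide
  have split1 : h.darts.countP (fun d => decide (parI i d.fst = 0)) =
      h.darts.countP (fun d => decide (parI i d.fst = 0) && decide (parI i d.snd = 0)) +
      h.darts.countP (fun d => decide (parI i d.fst = 0) && decide (parI i d.snd = 1)) := by
    rw [countP_split h.darts (fun d => decide (parI i d.fst = 0))
      (fun d => decide (parI i d.snd = 0))]
    congr 1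
    refine countP_ext _ fun d => ?_
    rw [hbool']
  have split2 : h.darts.countP (fun d => decide (parI i d.snd = 1)) =
      h.darts.countP (fun d => decide (parI i d.fst = 1) && decide (parI i d.snd = 1)) +
      h.darts.countP (fun d => decide (parI i d.fst = 0) && decide (parI i d.snd = 1)) := by
    rw [countP_split h.darts (fun d => decide (parI i d.snd = 1))
      (fun d => decide (parI i d.fst = 1))]
    congr 1
    · exact countP_ext _ fun d => Bool.and_comm _ _
    · refine countP_ext _ fun d => ?_
      rw [Bool.and_comm, hbool]
  rw [hedges 0, hedges 1]
  omega
end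

section
/- Let n ≥ 2 and i < n, and let h = h_0 h_1 ⋯ h_{2^n - 1} be a Hamiltonian cycle of Q_n (indices taken modulo 2^n) such that {h_0, h_1} is an i-th dimension edge. Let j_0 = 0 < j_1 < ⋯ < j_{c-1} < 2^n be the complete list of indices j for which {h_j, h_{j+1}} is an i-th dimension edge, and set j_c := 2^n. Then the sum of the even-indexed differences equals the sum of the odd-indexed differences and both equal 2^{n-1}: Σ_{k even, 0 ≤ k < c} (j_{k+1} − j_k) = 2^{n-1} = Σ_{k odd, 0 ≤ k < c} (j_{k+1} − j_k). -/
lemma single_self_add {n : ℕ} (i : Fin n) :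
    (Pi.single i 1 : Fin n → ZMod 2) + Pi.single i 1 = 0 := by
  funext j
  by_cases hj : j = i <;> simp [Pi.single_apply, hj]
  · decide

lemma isDimEdge_iff {n : ℕ} (i : Fin n) (v w : Fin n → ZMod 2) :
    isDimEdge i s(v, w) ↔ w = v + Pi.single i 1 := by
  constructor
  · rintro ⟨x, hx⟩
    rw [Sym2.eq_iff] at hx
    rcases hx with ⟨rfl, rfl⟩ | ⟨h1, rfl⟩
    · rfl
    · rw [h1, add_assoc, single_self_add, add_zero]
  · rintro rfl; exact ⟨v, rfl⟩
lemma card_coord_eq {n : ℕ} (hn : 1 ≤ n) (i : Fin n) (c : ZMod 2) :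
    (Finset.univ.filter (fun v : Fin n → ZMod 2 => v i = c)).card = 2 ^ (n - 1) := by
  classical
  have hbij : ∀ d : ZMod 2,
      ((Finset.univ.filter (fun v : Fin n → ZMod 2 => v i = d)).card =
       (Finset.univ.filter (fun v : Fin n → ZMod 2 => v i = d + 1)).card) := by
    intro d
    refine Finset.card_nbij' (fun v => v + Pi.single i 1) (fun v => v + Pi.single i 1) ?_ ?_ ?_ ?_
    · intro v hv
      simp only [Finset.coe_filter, Set.mem_setOf_eq, Finset.mem_filter, Finset.mem_univ, true_and] at hv ⊢
      simp [Pi.single_apply, hv]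
    · intro v hv
      simp only [Finset.coe_filter, Set.mem_setOf_eq, Finset.mem_filter, Finset.mem_univ, true_and] at hv ⊢
      have hd : ∀ x : ZMod 2, x + 1 + 1 = x := by decide
      simp [Pi.single_apply, hv, hd]
    · intro v _
      simp [add_assoc, single_self_add]
    · intro v _
      simp [add_assoc, single_self_add]
  have hsplit := Finset.card_filter_add_card_filter_not
      (s := (Finset.univ : Finset (Fin n → ZMod 2))) (p := fun v => v i = c)
  have hneg : (Finset.univ.filter (fun v : Fin n → ZMod 2 => ¬ v i = c)) =
      (Finset.univ.filter (fun v : Fin n → ZMod 2 => v i = c + 1)) := by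
    apply Finset.filter_congr
    intro v _
    have h2 : ∀ x d : ZMod 2, ¬ x = d ↔ x = d + 1 := by decide
    exact h2 _ _
  have hcard : (Finset.univ : Finset (Fin n → ZMod 2)).card = 2 ^ n := by
    simp [Finset.card_univ]
  rw [hneg, ← hbij c] at hsplit
  have h2 : 2 ^ n = 2 * 2 ^ (n - 1) := by
    obtain ⟨m, rfl⟩ : ∃ m, n = m + 1 := ⟨n - 1, (Nat.succ_pred_eq_of_pos (by positivity)).symm⟩
    simp [pow_succ', Nat.mul_comm]
  rw [hcard, h2] at hsplit
  refine Nat.eq_of_mul_eq_mul_left (show 0 < 2 by norm_num) ?_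
  rw [two_mul]
  exact hsplit

open SimpleGraph Walk in
lemma count_fiber {n : ℕ} {u : Fin n → ZMod 2} (h : (Q n).Walk u u)
    (hh : h.IsHamiltonianCycle) (P : (Fin n → ZMod 2) → Prop) [DecidablePred P] :
    ((Finset.Icc 1 h.length).filter (fun t => P (h.getVert t))).card
      = (Finset.univ.filter P).card := by
  classical
  have hlen : h.length = Fintype.card (Fin n → ZMod 2) := hh.length_eq
  have hpos : 0 < h.length := by rw [hlen]; exact Fintype.card_pos
  have hsurj : ∀ v : Fin n → ZMod 2, ∃ t ∈ Finset.Icc 1 h.length, h.getVert t = v := by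
    intro v
    obtain ⟨t, htv, htl⟩ := Walk.mem_support_iff_exists_getVert.mp (hh.mem_support v)
    rcases Nat.eq_zero_or_pos t with rfl | ht
    · refine ⟨h.length, Finset.mem_Icc.mpr ⟨hpos, le_rfl⟩, ?_⟩
      rw [Walk.getVert_length]
      rw [Walk.getVert_zero] at htv
      exact htv
    · exact ⟨t, Finset.mem_Icc.mpr ⟨ht, htl⟩, htv⟩
  have hcardIcc : (Finset.Icc 1 h.length).card = Fintype.card (Fin n → ZMod 2) := by
    rw [Nat.card_Icc, hlen]
    omega
  have hinj : Set.InjOn h.getVert ↑(Finset.Icc 1 h.length) := by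
    intro a ha b hb hab
    exact Finset.inj_on_of_surj_on_of_card_le (t := (Finset.univ : Finset (Fin n → ZMod 2)))
      (fun a _ => h.getVert a)
      (fun a ha => Finset.mem_univ _)
      (fun b _ => by obtain ⟨t, ht, h'⟩ := hsurj b; exact ⟨t, ht, h'⟩)
      (by rw [hcardIcc]; simp) ha hb hab
  have himage : (Finset.Icc 1 h.length).image h.getVert = Finset.univ := by
    apply Finset.eq_univ_of_card
    rw [Finset.card_image_of_injOn hinj, hcardIcc]
  calc ((Finset.Icc 1 h.length).filter (fun t => P (h.getVert t))).card
      = (((Finset.Icc 1 h.length).filter (fun t => P (h.getVert t))).image h.getVert).card := by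
        rw [Finset.card_image_of_injOn (hinj.mono (Finset.coe_subset.mpr (Finset.filter_subset _ _)))]
    _ = (Finset.univ.filter P).card := by rw [← Finset.filter_image, himage]
theorem chromatic_segments_balance (n : ℕ) (hn : 2 ≤ n) (i : Fin n)
    (u : Fin n → ZMod 2) (h : (Q n).Walk u u) (hh : h.IsHamiltonianCycle)
    (h0 : isDimEdge i s(h.getVert 0, h.getVert 1)) :
    ∀ J : Finset ℕ, J = (Finset.range (2 ^ n)).filter
        (fun j => isDimEdge i s(h.getVert j, h.getVert (j + 1))) →
    ∀ L : List ℕ, L = J.sort (· ≤ ·) ++ [2 ^ n] →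
      (∑ k ∈ (Finset.range J.card).filter (fun k => Even k),
          (L.getD (k + 1) 0 - L.getD k 0) = 2 ^ (n - 1)) ∧
      (∑ k ∈ (Finset.range J.card).filter (fun k => Odd k),
          (L.getD (k + 1) 0 - L.getD k 0) = 2 ^ (n - 1)) := by
  intro J hJ L hL
  classical
  have hNpos : 0 < 2 ^ n := Nat.two_pow_pos n
  have hlen : h.length = 2 ^ n := by
    rw [hh.length_eq]
    simp [ZMod.card]
  -- membership in J
  have hmemJ : ∀ t, t ∈ J ↔ t < 2 ^ n ∧ h.getVert (t + 1) = h.getVert t + Pi.single i 1 := by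
    intro t
    rw [hJ, Finset.mem_filter, Finset.mem_range, isDimEdge_iff]
  have h0J : (0 : ℕ) ∈ J := (hmemJ 0).mpr ⟨hNpos, (isDimEdge_iff i _ _).mp h0⟩
  have hJltN : ∀ x ∈ J, x < 2 ^ n := fun x hx => ((hmemJ x).mp hx).1
  -- the flip-count function
  set g : ℕ → ℕ := fun t => (J.filter (· < t)).card with hgdef
  have gmono : ∀ ⦃s t : ℕ⦄, s ≤ t → g s ≤ g t := by
    intro s t hst
    exact Finset.card_le_card (Finset.monotone_filter_right _ (fun x _ hx => lt_of_lt_of_le hx hst))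
  have g0 : g 0 = 0 := by simp [hgdef]
  have gstep : ∀ t, g (t + 1) = g t + (if t ∈ J then 1 else 0) := by
    intro t
    have hsplit : J.filter (· < t + 1) = J.filter (· < t) ∪ J.filter (· = t) := by
      rw [← Finset.filter_or]
      apply Finset.filter_congr
      intro x _
      simp [Nat.lt_succ_iff_lt_or_eq, Nat.le_iff_lt_or_eq]
    have hdisj : Disjoint (J.filter (· < t)) (J.filter (· = t)) := by
      rw [Finset.disjoint_left]
      intro x hx hx'
      have h1 := (Finset.mem_filter.mp hx).2
      have h2 := (Finset.mem_filter.mp hx').2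
      omega
    show (J.filter (· < t + 1)).card = (J.filter (· < t)).card + _
    rw [hsplit, Finset.card_union_of_disjoint hdisj, Finset.filter_eq']
    split_ifs with ht <;> simp
  have gle : ∀ t, g t ≤ J.card := fun t => Finset.card_le_card (Finset.filter_subset _ _)
  have g1 : ∀ t, 1 ≤ t → 1 ≤ g t := by
    intro t ht
    have : g 1 = 1 := by rw [show (1:ℕ) = 0 + 1 from rfl, gstep, if_pos h0J, g0]
    calc 1 = g 1 := this.symm
      _ ≤ g t := gmono ht
  -- the coordinate function
  set f : ℕ → ZMod 2 := fun t => h.getVert t i with hfdef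
  have fstep : ∀ t, t < 2 ^ n → f (t + 1) = f t + (if t ∈ J then 1 else 0) := by
    intro t ht
    obtain ⟨k, hk⟩ := h.adj_getVert_succ (i := t) (by rw [hlen]; exact ht)
    by_cases htJ : t ∈ J
    · rw [if_pos htJ]
      have heq := ((hmemJ t).mp htJ).2
      show h.getVert (t+1) i = h.getVert t i + 1
      rw [heq]
      simp [Pi.single_apply]
    · rw [if_neg htJ, add_zero]
      have hki : k ≠ i := by
        rintro rfl
        exact htJ ((hmemJ t).mpr ⟨ht, hk⟩)
      show h.getVert (t+1) i = h.getVert t i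
      rw [hk]
      simp [Pi.single_apply, Ne.symm hki]
  have claimA : ∀ t, t ≤ 2 ^ n → f t = f 0 + (g t : ZMod 2) := by
    intro t
    induction t with
    | zero => intro _; rw [g0]; simp
    | succ t ih =>
      intro ht
      rw [fstep t (by omega), ih (by omega), gstep t]
      push_cast
      ring
  -- sorted list facts
  have hMlen : (J.sort (· ≤ ·)).length = J.card := Finset.length_sort _
  have hcpos : 0 < J.card := Finset.card_pos.mpr ⟨0, h0J⟩
  have hlk : ∀ k (hk : k < J.card),
      L.getD k 0 = (J.sort (· ≤ ·)).get ⟨k, by rw [hMlen]; exact hk⟩ := by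
    intro k hk
    rw [hL, List.getD_append _ _ _ _ (by rw [hMlen]; exact hk),
      List.getD_eq_getElem _ _ (by rw [hMlen]; exact hk)]
    rfl
  have hlc : L.getD J.card 0 = 2 ^ n := by
    rw [hL, List.getD_append_right _ _ _ _ (le_of_eq hMlen), hMlen]
    simp
  have hmemM : ∀ x, x ∈ J.sort (· ≤ ·) ↔ x ∈ J := fun x => Finset.mem_sort _
  have hsorted := (Finset.sortedLT_sort J).pairwise
  have hsorted' := Finset.pairwise_sort J (· ≤ ·)
  have hlkJ : ∀ k (hk : k < J.card), L.getD k 0 ∈ J := by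
    intro k hk
    rw [hlk k hk]
    exact (hmemM _).mp (List.get_mem _ _)
  have hlmono : ∀ a b, a < b → b ≤ J.card → L.getD a 0 < L.getD b 0 := by
    intro a b hab hbc
    rcases eq_or_lt_of_le hbc with rfl | hb
    · rw [hlc]
      exact hJltN _ (hlkJ a hab)
    · rw [hlk a (lt_trans hab hb), hlk b hb]
      exact hsorted.rel_get_of_lt (by simpa [Fin.lt_def] using hab)
  have hl0 : L.getD 0 0 = 0 := by
    obtain ⟨m, hm⟩ := List.get_of_mem ((hmemM 0).mpr h0J)
    have hle : (J.sort (· ≤ ·)).get ⟨0, by rw [hMlen]; exact hcpos⟩ ≤ (J.sort (· ≤ ·)).get m :=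
      hsorted'.rel_get_of_le (by simp only [Fin.le_def]; omega)
    rw [hm] at hle
    rw [hlk 0 hcpos]
    omega
  have hgap : ∀ k, k < J.card → ∀ x ∈ J, L.getD k 0 < x → L.getD (k + 1) 0 ≤ x := by
    intro k hk x hxJ hlkx
    obtain ⟨m, hm⟩ := List.get_of_mem ((hmemM x).mpr hxJ)
    have hmlen : (m : ℕ) < J.card := by rw [← hMlen]; exact m.isLt
    have hkm : k < (m : ℕ) := by
      by_contra hkm
      push_neg at hkm
      have hxle : (J.sort (· ≤ ·)).get m ≤ (J.sort (· ≤ ·)).get ⟨k, by rw [hMlen]; exact hk⟩ :=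
        hsorted'.rel_get_of_le (by simp only [Fin.le_def]; omega)
      rw [hm, ← hlk k hk] at hxle
      omega
    rcases lt_or_eq_of_le (Nat.succ_le_of_lt hk) with hk1 | hk1
    · have hxge : (J.sort (· ≤ ·)).get ⟨k + 1, by rw [hMlen]; exact hk1⟩ ≤ (J.sort (· ≤ ·)).get m :=
        hsorted'.rel_get_of_le (by simp only [Fin.le_def]; omega)
      rw [hm, ← hlk (k + 1) hk1] at hxge
      exact hxge
    · omega
  -- g at the breakpoints
  have gl : ∀ k, k ≤ J.card → g (L.getD k 0) = k := by
    intro k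
    induction k with
    | zero => intro _; rw [hl0, g0]
    | succ k ih =>
      intro hk1
      have hk : k < J.card := by omega
      have hmemlk : L.getD k 0 ∈ J := hlkJ k hk
      have hlt : L.getD k 0 < L.getD (k + 1) 0 := hlmono k (k + 1) (by omega) hk1
      have heq : J.filter (· < L.getD (k + 1) 0) = J.filter (· < L.getD k 0 + 1) := by
        apply Finset.filter_congr
        intro x hxJ
        constructor
        · intro hx
          by_contra hx'
          have := hgap k hk x hxJ (by omega)
          omega
        · intro hx
          omega
      have hstep : g (L.getD (k + 1) 0) = g (L.getD k 0 + 1) := by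
        show (J.filter (· < L.getD (k + 1) 0)).card = (J.filter (· < L.getD k 0 + 1)).card
        rw [heq]
      rw [hstep, gstep, if_pos hmemlk, ih (by omega)]
  have gval : ∀ k, k < J.card → ∀ t, L.getD k 0 < t → t ≤ L.getD (k + 1) 0 → g t = k + 1 := by
    intro k hk t h1 h2
    have ha : g (L.getD k 0 + 1) ≤ g t := gmono (by omega)
    have hb : g t ≤ g (L.getD (k + 1) 0) := gmono h2
    rw [gstep, if_pos (hlkJ k hk), gl k (le_of_lt hk)] at ha
    rw [gl (k + 1) (by omega)] at hb
    exact le_antisymm hb ha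
  -- interval characterisation
  have hIoc : ∀ k, k < J.card →
      (Finset.Icc 1 (2 ^ n)).filter (fun t => g t = k + 1)
        = Finset.Ioc (L.getD k 0) (L.getD (k + 1) 0) := by
    intro k hk
    ext t
    simp only [Finset.mem_filter, Finset.mem_Icc, Finset.mem_Ioc]
    constructor
    · rintro ⟨⟨ht1, ht2⟩, hgt⟩
      constructor
      · by_contra hle
        push_neg at hle
        have hmo := gmono hle
        rw [gl k hk.le, hgt] at hmo
        omega
      · by_cases hc1 : k + 1 < J.card
        · by_contra hle
          push_neg at hle
          have h3 := gmono (show L.getD (k + 1) 0 + 1 ≤ t by omega)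
          rw [gstep, if_pos (hlkJ (k + 1) hc1), gl (k + 1) hc1.le, hgt] at h3
          omega
        · have hkc : k + 1 = J.card := by omega
          rw [hkc, hlc]
          exact ht2
    · rintro ⟨h1, h2⟩
      have h4 : t ≤ 2 ^ n := by
        rcases lt_or_eq_of_le (Nat.succ_le_of_lt hk) with hk1 | hk1
        · have := hlmono (k + 1) J.card hk1 le_rfl
          rw [hlc] at this
          omega
        · have hkc : k + 1 = J.card := hk1
          rw [hkc, hlc] at h2
          exact h2
      exact ⟨⟨by omega, h4⟩, gval k hk t h1 h2⟩
  -- summing gaps equals counting indices with given flip-parity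
  have hsum : ∀ (p : ℕ → Prop) (_ : DecidablePred p),
      (∑ k ∈ (Finset.range J.card).filter (fun k => p k), (L.getD (k + 1) 0 - L.getD k 0))
        = ((Finset.Icc 1 (2 ^ n)).filter (fun t => p (g t - 1))).card := by
    intro p hp
    have hdisj : ∀ k₁ ∈ (Finset.range J.card).filter (fun k => p k),
        ∀ k₂ ∈ (Finset.range J.card).filter (fun k => p k), k₁ ≠ k₂ →
        Disjoint ((Finset.Icc 1 (2 ^ n)).filter (fun t => g t = k₁ + 1))
                 ((Finset.Icc 1 (2 ^ n)).filter (fun t => g t = k₂ + 1)) := by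
      intro k₁ _ k₂ _ hne
      rw [Finset.disjoint_left]
      intro t ht1 ht2
      have e1 := (Finset.mem_filter.mp ht1).2
      have e2 := (Finset.mem_filter.mp ht2).2
      exact hne (by omega)
    calc (∑ k ∈ (Finset.range J.card).filter (fun k => p k), (L.getD (k + 1) 0 - L.getD k 0))
        = ∑ k ∈ (Finset.range J.card).filter (fun k => p k),
            ((Finset.Icc 1 (2 ^ n)).filter (fun t => g t = k + 1)).card := by
          refine Finset.sum_congr rfl ?_
          intro k hk
          have hkc : k < J.card := Finset.mem_range.mp (Finset.mem_filter.mp hk).1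
          rw [hIoc k hkc, Nat.card_Ioc]
      _ = (((Finset.range J.card).filter (fun k => p k)).biUnion
            (fun k => (Finset.Icc 1 (2 ^ n)).filter (fun t => g t = k + 1))).card :=
          (Finset.card_biUnion hdisj).symm
      _ = ((Finset.Icc 1 (2 ^ n)).filter (fun t => p (g t - 1))).card := by
          congr 1
          ext t
          simp only [Finset.mem_biUnion, Finset.mem_filter, Finset.mem_range, Finset.mem_Icc]
          constructor
          · rintro ⟨k, ⟨hkc, hpk⟩, hIcc, hgt⟩
            refine ⟨hIcc, ?_⟩
            rw [hgt]
            simpa using hpk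
          · rintro ⟨hIcc, hp'⟩
            have hg1 : 1 ≤ g t := g1 t hIcc.1
            have hg2 : g t ≤ J.card := gle t
            exact ⟨g t - 1, ⟨by omega, hp'⟩, hIcc, by omega⟩
  -- parity of flips vs value of the i-th coordinate
  have hEvenIff : ∀ t, 1 ≤ t → t ≤ 2 ^ n → (Even (g t - 1) ↔ f t = f 0 + 1) := by
    intro t h1 h2
    have hg1 := g1 t h1
    rw [claimA t h2, add_right_inj, ZMod.natCast_eq_one_iff_odd, Nat.odd_iff, Nat.even_iff]
    omega
  have hOddIff : ∀ t, 1 ≤ t → t ≤ 2 ^ n → (Odd (g t - 1) ↔ f t = f 0) := by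
    intro t h1 h2
    have hg1 := g1 t h1
    rw [claimA t h2]
    rw [show (f 0 + (g t : ZMod 2) = f 0) ↔ ((g t : ZMod 2) = 0) from by
      constructor
      · intro hx
        have := add_left_cancel (a := f 0) (b := ((g t : ℕ) : ZMod 2)) (c := 0) (by rw [add_zero]; exact hx)
        exact this
      · intro hx; rw [hx, add_zero]]
    rw [ZMod.natCast_eq_zero_iff_even, Nat.odd_iff, Nat.even_iff]
    omega
  constructor
  · rw [hsum Even inferInstance]
    have hfe : (Finset.Icc 1 (2 ^ n)).filter (fun t => Even (g t - 1))
        = (Finset.Icc 1 h.length).filter (fun t => h.getVert t i = f 0 + 1) := by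
      rw [hlen]
      apply Finset.filter_congr
      intro t htI
      obtain ⟨ht1, ht2⟩ := Finset.mem_Icc.mp htI
      exact hEvenIff t ht1 ht2
    rw [hfe]
    calc ((Finset.Icc 1 h.length).filter (fun t => h.getVert t i = f 0 + 1)).card
        = (Finset.univ.filter (fun v : Fin n → ZMod 2 => v i = f 0 + 1)).card :=
          count_fiber h hh (fun v => v i = f 0 + 1)
      _ = 2 ^ (n - 1) := card_coord_eq (by omega) i _
  · rw [hsum Odd inferInstance]
    have hfo : (Finset.Icc 1 (2 ^ n)).filter (fun t => Odd (g t - 1))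
        = (Finset.Icc 1 h.length).filter (fun t => h.getVert t i = f 0) := by
      rw [hlen]
      apply Finset.filter_congr
      intro t htI
      obtain ⟨ht1, ht2⟩ := Finset.mem_Icc.mp htI
      exact hOddIff t ht1 ht2
    rw [hfo]
    calc ((Finset.Icc 1 h.length).filter (fun t => h.getVert t i = f 0)).card
        = (Finset.univ.filter (fun v : Fin n → ZMod 2 => v i = f 0)).card :=
          count_fiber h hh (fun v => v i = f 0)
      _ = 2 ^ (n - 1) := card_coord_eq (by omega) i _
end

section
/- Let n ≥ 2 and let h be a Hamiltonian cycle of the hypercube Q_n. If for some i < n the number of i-th dimension edges of h is strictly greater than 2^{n-2}, then h contains a square whose rims are i-th dimension edges: there exist a vertex v and an index j ≠ i such that both {v, v + e_i} and {v + e_j, v + e_i + e_j} are edges of h. -/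
def zz {n : ℕ} (i j : Fin n) (w : Fin n → ZMod 2) : Fin n → ZMod 2 :=
  Function.update (Function.update w i 0) j 0

lemma zz_i {n : ℕ} {i j : Fin n} (hij : i ≠ j) (w : Fin n → ZMod 2) : zz i j w i = 0 := by
  simp [zz, Function.update_apply, hij]

lemma zz_j {n : ℕ} (i j : Fin n) (w : Fin n → ZMod 2) : zz i j w j = 0 := by
  simp [zz]

lemma zz_ne {n : ℕ} {i j k : Fin n} (hki : k ≠ i) (hkj : k ≠ j) (w : Fin n → ZMod 2) :
    zz i j w k = w k := by
  simp [zz, Function.update_apply, hki, hkj]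

lemma add_single_single {n : ℕ} (w : Fin n → ZMod 2) (k : Fin n) :
    w + Pi.single k 1 + Pi.single k 1 = w := by
  funext m
  by_cases hm : m = k <;> simp [Pi.single_apply, hm]
  exact (by decide : ∀ a : ZMod 2, a + 1 + 1 = a) _

lemma single_add_single {n : ℕ} (k : Fin n) :
    (Pi.single k 1 : Fin n → ZMod 2) + Pi.single k 1 = 0 := by
  funext m
  by_cases hm : m = k <;> simp [Pi.single_apply, hm]
  decide

theorem square_of_many_edges (n : ℕ) (hn : 2 ≤ n) (u : Fin n → ZMod 2)
    (h : (Q n).Walk u u) (hh : h.IsHamiltonianCycle) (i : Fin n)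
    (hc : 2 ^ (n - 2) < dimCount i h) :
    ∃ (v : Fin n → ZMod 2) (j : Fin n), j ≠ i ∧
      s(v, v + Pi.single i 1) ∈ h.edges ∧
      s(v + Pi.single j 1, v + Pi.single i 1 + Pi.single j 1) ∈ h.edges := by
  classical
  have hnt : Nontrivial (Fin n) := Fin.nontrivial_iff_two_le.mpr hn
  obtain ⟨j, hj⟩ := exists_ne i
  have hij : i ≠ j := Ne.symm hj
  -- the finset of i-dimension edges of h
  set E : Finset (Sym2 (Fin n → ZMod 2)) :=
    (h.edges.filter (fun e => decide (isDimEdge i e))).toFinset with hE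
  have hmemE : ∀ e, e ∈ E ↔ e ∈ h.edges ∧ isDimEdge i e := by
    intro e; simp [hE, List.mem_filter]
  have hEcard : E.card = dimCount i h := by
    have hnd : h.edges.Nodup := hh.isCycle.edges_nodup
    rw [hE, List.toFinset_card_of_nodup (hnd.filter _), dimCount,
      List.countP_eq_length_filter]
  -- target finset
  set T : Finset (Fin n → ZMod 2) :=
    Finset.univ.filter (fun g => g i = 0 ∧ g j = 0) with hT
  have hTcard : T.card ≤ 2 ^ (n - 2) := by
    have hcs : Fintype.card {k : Fin n // ¬(k = i ∨ k = j)} = n - 2 := by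
      rw [Fintype.card_subtype_compl]
      congr 1
      · exact Fintype.card_fin n
      · rw [Fintype.card_subtype]
        have : (Finset.univ.filter (fun k : Fin n => k = i ∨ k = j)) = {i, j} := by
          ext k; simp
        rw [this, Finset.card_pair hij]
    have hcard2 : Fintype.card ({k : Fin n // ¬(k = i ∨ k = j)} → ZMod 2) = 2 ^ (n - 2) := by
      rw [Fintype.card_fun, hcs, ZMod.card]
    calc T.card ≤ (Finset.univ : Finset ({k : Fin n // ¬(k = i ∨ k = j)} → ZMod 2)).card := by
          apply Finset.card_le_card_of_injOn (fun g k => g k.1)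
            (fun g _ => Finset.mem_univ _)
          intro g1 hg1 g2 hg2 heq
          simp only [hT, Finset.mem_coe, Finset.mem_filter] at hg1 hg2
          funext k
          by_cases hki : k = i
          · rw [hki, hg1.2.1, hg2.2.1]
          by_cases hkj : k = j
          · rw [hkj, hg1.2.2, hg2.2.2]
          exact congrFun heq ⟨k, by tauto⟩
      _ = 2 ^ (n - 2) := by rw [Finset.card_univ, hcard2]
  have hlt : T.card < E.card := lt_of_le_of_lt hTcard (hEcard ▸ hc)
  -- the projection map
  set f : Sym2 (Fin n → ZMod 2) → (Fin n → ZMod 2) :=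
    fun e => if hd : isDimEdge i e then zz i j hd.choose else 0 with hf
  have hmaps : ∀ e ∈ E, f e ∈ T := by
    intro e he
    have hd : isDimEdge i e := ((hmemE e).1 he).2
    simp only [hf, dif_pos hd, hT, Finset.mem_filter, Finset.mem_univ, true_and]
    exact ⟨zz_i hij _, zz_j _ _ _⟩
  obtain ⟨e1, he1, e2, he2, hne, hfeq⟩ :=
    Finset.exists_ne_map_eq_of_card_lt_of_maps_to hlt hmaps
  have hd1 : isDimEdge i e1 := ((hmemE e1).1 he1).2
  have hd2 : isDimEdge i e2 := ((hmemE e2).1 he2).2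
  set w1 := hd1.choose with hw1d
  set w2 := hd2.choose with hw2d
  have hw1 : e1 = s(w1, w1 + Pi.single i 1) := hd1.choose_spec
  have hw2 : e2 = s(w2, w2 + Pi.single i 1) := hd2.choose_spec
  have hzeq : zz i j w1 = zz i j w2 := by
    simpa only [hf, dif_pos hd1, dif_pos hd2] using hfeq
  have hagree : ∀ k, k ≠ i → k ≠ j → w1 k = w2 k := by
    intro k hki hkj
    have := congrFun hzeq k
    rwa [zz_ne hki hkj, zz_ne hki hkj] at this
  have hdecomp : w2 = w1 + Pi.single i (w1 i + w2 i) + Pi.single j (w1 j + w2 j) := by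
    funext k
    by_cases hki : k = i
    · subst hki
      simp only [Pi.add_apply, Pi.single_apply, if_pos rfl]
      rw [if_neg hij]
      exact (by decide : ∀ a b : ZMod 2, b = a + (a + b) + 0) _ _
    by_cases hkj : k = j
    · subst hkj
      simp only [Pi.add_apply, Pi.single_apply, if_pos rfl, if_neg hj]
      exact (by decide : ∀ a b : ZMod 2, b = a + 0 + (a + b)) _ _
    · simp only [Pi.add_apply, Pi.single_apply, if_neg hki, if_neg hkj]
      rw [add_zero, add_zero]
      exact (hagree k hki hkj).symm
  have h2 : ∀ a : ZMod 2, a = 0 ∨ a = 1 := by decide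
  rcases h2 (w1 i + w2 i) with ha | ha <;> rcases h2 (w1 j + w2 j) with hb | hb <;>
    rw [ha, hb] at hdecomp <;> (try simp only [Pi.single_zero, add_zero] at hdecomp)
  · exact absurd (by rw [hw1, hw2, hdecomp]) hne
  · -- w2 = w1 + e_j
    refine ⟨w1, j, hj, ?_, ?_⟩
    · rw [← hw1]; exact ((hmemE e1).1 he1).1
    · have he : e2 = s(w1 + Pi.single j 1, w1 + Pi.single i 1 + Pi.single j 1) := by
        rw [hw2, hdecomp, add_right_comm]
      rw [← he]; exact ((hmemE e2).1 he2).1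
  · -- w2 = w1 + e_i
    exfalso
    apply hne
    rw [hw1, hw2, hdecomp, add_single_single]
    exact Sym2.eq_swap
  · -- w2 = w1 + e_i + e_j
    refine ⟨w1, j, hj, ?_, ?_⟩
    · rw [← hw1]; exact ((hmemE e1).1 he1).1
    · have hb2 : w1 + Pi.single i 1 + Pi.single j 1 + Pi.single i 1
          = w1 + Pi.single j 1 := by
        rw [add_right_comm (w1 + Pi.single i 1) (Pi.single j 1), add_single_single]
      have he : e2 = s(w1 + Pi.single j 1, w1 + Pi.single i 1 + Pi.single j 1) := by
        rw [hw2, hdecomp, hb2]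
        exact Sym2.eq_swap
      rw [← he]; exact ((hmemE e2).1 he2).1
end

section
/- For every integer n ≥ 3, the equi-independence number of the hypercube Q_n satisfies α_=(Q_n) ≥ 2^{n-2}: there exists an independent set of Q_n of cardinality 2^{n-2} containing exactly 2^{n-3} even-parity vertices and exactly 2^{n-3} odd-parity vertices. -/
/-- Parity of a vertex of the hypercube: number of coordinates equal to 1, mod 2. -/
def par {n : ℕ} (v : Fin n → ZMod 2) : ZMod 2 := ∑ j, v j

/-- A finite set of vertices is independent in `G` if no two of its elements are adjacent. -/
def IsIndepFinset {V : Type*} (G : SimpleGraph V) (S : Finset V) : Prop :=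
  ∀ u ∈ S, ∀ v ∈ S, ¬ G.Adj u v

/-- The equi-independence number of the hypercube `Q m`: the maximum cardinality of an
independent set containing equally many even-parity and odd-parity vertices. -/
noncomputable def equiIndepNum (m : ℕ) : ℕ :=
  sSup {k : ℕ | ∃ S : Finset (Fin m → ZMod 2), IsIndepFinset (Q m) S ∧
    (S.filter fun v => par v = 0).card = (S.filter fun v => par v = 1).card ∧
    S.card = k}

/-- The parametrization of our independent set. -/
def phi (m : ℕ) (a : ZMod 2) (w : Fin m → ZMod 2) : Fin (m + 3) → ZMod 2 :=
  Fin.cons (a + ∑ k, w k) (Fin.cons a (Fin.cons a w))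

lemma par_flip {n : ℕ} (u : Fin n → ZMod 2) (i : Fin n) :
    par (u + Pi.single i 1) = par u + 1 := by
  unfold par
  simp [Finset.sum_add_distrib]

lemma par_phi (m : ℕ) (a : ZMod 2) (w : Fin m → ZMod 2) : par (phi m a w) = a := by
  simp only [par, phi, Fin.sum_univ_succ, Fin.cons_zero, Fin.cons_succ]
  have : ∀ x y : ZMod 2, x + y + (x + (x + y)) = x := by decide
  exact this a _

theorem equiIndepNum_lower_bound (n : ℕ) (hn : 3 ≤ n) :
    2 ^ (n - 2) ≤ equiIndepNum n ∧
    ∃ S : Finset (Fin n → ZMod 2), IsIndepFinset (Q n) S ∧ S.card = 2 ^ (n - 2) ∧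
      (S.filter fun v => par v = 0).card = 2 ^ (n - 3) ∧
      (S.filter fun v => par v = 1).card = 2 ^ (n - 3) := by
  obtain ⟨m, rfl⟩ : ∃ m, n = m + 3 := ⟨n - 3, by omega⟩
  have e2 : m + 3 - 2 = m + 1 := by omega
  have e3 : m + 3 - 3 = m := by omega
  set f : ZMod 2 × (Fin m → ZMod 2) → (Fin (m + 3) → ZMod 2) :=
    fun p => phi m p.1 p.2 with hf
  have hinj : Function.Injective f := by
    rintro ⟨a, w⟩ ⟨a', w'⟩ h
    have ha : a = a' := by
      have := congrFun h (Fin.succ 0)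
      simpa [hf, phi] using this
    have hw : w = w' := funext fun k => by
      have := congrFun h (Fin.succ (Fin.succ (Fin.succ k)))
      simpa [hf, phi] using this
    simp [ha, hw]
  set S : Finset (Fin (m + 3) → ZMod 2) := Finset.image f Finset.univ with hS
  have hindep : IsIndepFinset (Q (m + 3)) S := by
    intro u hu v hv hadj
    simp only [hS, Finset.mem_image, Finset.mem_univ, true_and] at hu hv
    obtain ⟨⟨a, w⟩, rfl⟩ := hu
    obtain ⟨⟨a', w'⟩, rfl⟩ := hv
    obtain ⟨i, hi⟩ := hadj
    have hcoord : ∀ j, j ≠ i → phi m a' w' j = phi m a w j := by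
      intro j hj
      have := congrFun hi j
      simpa [hf, Pi.single_eq_of_ne hj] using this
    have ha : a' = a := by
      by_cases h1 : i = Fin.succ 0
      · have hne : (Fin.succ (Fin.succ 0) : Fin (m + 3)) ≠ i := by
          rw [h1]
          intro hc
          exact Fin.succ_ne_zero _ (Fin.succ_injective _ hc)
        have := hcoord _ hne
        simp only [phi, Fin.cons_succ, Fin.cons_zero] at this
        exact this
      · have := hcoord (Fin.succ 0) (fun h => h1 h.symm)
        simpa [phi] using this
    simp only [hf] at hi
    have hpar : par (phi m a' w') = par (phi m a w) + 1 := by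
      rw [hi]; exact par_flip _ _
    simp only [par_phi, ha] at hpar
    exact one_ne_zero (left_eq_add.mp hpar)
  have hcardS : S.card = 2 ^ (m + 1) := by
    rw [hS, Finset.card_image_of_injective _ hinj, Finset.card_univ]
    simp only [Fintype.card_prod, Fintype.card_fun, Fintype.card_fin]
    have : Fintype.card (ZMod 2) = 2 := by simp
    rw [this, pow_succ]
    ring
  have hfilter : ∀ b : ZMod 2, (S.filter fun v => par v = b).card = 2 ^ m := by
    intro b
    have heq : S.filter (fun v => par v = b)
        = Finset.image f (Finset.univ.filter fun p => p.1 = b) := by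
      ext v
      simp only [hS, Finset.mem_filter, Finset.mem_image, Finset.mem_univ, true_and]
      constructor
      · rintro ⟨⟨⟨a, w⟩, rfl⟩, hb⟩
        exact ⟨⟨a, w⟩, by simpa [hf, par_phi] using hb, rfl⟩
      · rintro ⟨⟨a, w⟩, hb, rfl⟩
        exact ⟨⟨⟨a, w⟩, rfl⟩, by simpa [hf, par_phi] using hb⟩
    rw [heq, Finset.card_image_of_injective _ hinj]
    have hset : (Finset.univ.filter fun p : ZMod 2 × (Fin m → ZMod 2) => p.1 = b)
        = {b} ×ˢ Finset.univ := by
      ext ⟨a, w⟩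
      simp [eq_comm]
    rw [hset, Finset.card_product, Finset.card_singleton, Finset.card_univ]
    simp [Fintype.card_fun]
  refine ⟨?_, S, hindep, by rw [hcardS, e2], by rw [hfilter 0, e3], by rw [hfilter 1, e3]⟩
  rw [e2]
  apply le_csSup
  · refine ⟨2 ^ (m + 3), ?_⟩
    rintro k ⟨T, -, -, rfl⟩
    calc T.card ≤ Fintype.card (Fin (m + 3) → ZMod 2) := Finset.card_le_univ T
      _ = 2 ^ (m + 3) := by
          simp only [Fintype.card_fun, Fintype.card_fin, ZMod.card]
  · exact ⟨S, hindep, by rw [hfilter 0, hfilter 1], hcardS⟩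
end

section
/- For every integer n ≥ 3, the set I = { v ∈ (Fin n → ZMod 2) : v_0 = v_1 and v_0 equals the parity of v } is a maximal independent set of the hypercube Q_n of cardinality 2^{n-2}, and it contains exactly 2^{n-3} even-parity vertices and exactly 2^{n-3} odd-parity vertices. -/
section Helpers

variable {m : ℕ}

lemma par_add' (a b : Fin (m+3) → ZMod 2) : par (a+b) = par a + par b := by
  simp [par, Finset.sum_add_distrib]

lemma par_single' (i : Fin (m+3)) : par (Pi.single i (1 : ZMod 2)) = 1 := by
  simp [par, Finset.sum_pi_single']

def extFun (m : ℕ) (t : Fin (m+1) → ZMod 2) : Fin (m+3) → ZMod 2 :=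
  fun k => if h : 2 ≤ k.val then t ⟨k.val - 2, by have := k.isLt; omega⟩ else ∑ j, t j

lemma extFun_tail (t : Fin (m+1) → ZMod 2) (j : Fin (m+1)) :
    extFun m t j.succ.succ = t j := by
  rw [extFun, dif_pos (by simp [Fin.val_succ])]
  congr 1

lemma extFun_lt (t : Fin (m+1) → ZMod 2) (k : Fin (m+3)) (hk : k.val < 2) :
    extFun m t k = ∑ j, t j := by
  rw [extFun, dif_neg (by omega)]

lemma par_split (v : Fin (m+3) → ZMod 2) :
    par v = v ⟨0, by omega⟩ + v ⟨1, by omega⟩ + ∑ j : Fin (m+1), v j.succ.succ := by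
  have e0 : (0 : Fin (m+3)) = ⟨0, by omega⟩ := by ext; simp
  have e1 : ((0 : Fin (m+2)).succ) = (⟨1, by omega⟩ : Fin (m+3)) := by ext; simp
  rw [par, Fin.sum_univ_succ, Fin.sum_univ_succ, e0, e1, add_assoc]

end Helpers

theorem explicit_maximal_equi_indep (n : ℕ) (hn : 3 ≤ n) :
    ∀ I : Finset (Fin n → ZMod 2),
      I = Finset.univ.filter
        (fun v => v ⟨0, by omega⟩ = v ⟨1, by omega⟩ ∧ v ⟨0, by omega⟩ = par v) →
      IsIndepFinset (Q n) I ∧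
      (∀ T : Finset (Fin n → ZMod 2), IsIndepFinset (Q n) T → I ⊆ T → T = I) ∧
      I.card = 2 ^ (n - 2) ∧
      (I.filter fun v => par v = 0).card = 2 ^ (n - 3) ∧
      (I.filter fun v => par v = 1).card = 2 ^ (n - 3) := by
  obtain ⟨m, rfl⟩ : ∃ m, n = m + 3 := ⟨n - 3, by omega⟩
  intro I hI
  have z0 : Fin (m+3) := ⟨0, by omega⟩
  -- membership characterization
  have memI : ∀ v : Fin (m+3) → ZMod 2,
      v ∈ I ↔ (v ⟨0, by omega⟩ = v ⟨1, by omega⟩ ∧ v ⟨0, by omega⟩ = par v) := by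
    intro v; rw [hI, Finset.mem_filter]; simp
  have zfact : ∀ a b t : ZMod 2, (a = b ∧ a = a + b + t) ↔ (a = t ∧ b = t) := by decide
  have memI' : ∀ v : Fin (m+3) → ZMod 2,
      v ∈ I ↔ (v ⟨0, by omega⟩ = ∑ j : Fin (m+1), v j.succ.succ ∧
               v ⟨1, by omega⟩ = ∑ j : Fin (m+1), v j.succ.succ) := by
    intro v
    rw [memI v, par_split v]
    exact zfact _ _ _
  -- single values at distinguished coordinates
  have hne01 : (⟨0, by omega⟩ : Fin (m+3)) ≠ ⟨1, by omega⟩ := by simp [Fin.ext_iff]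
  have hne02 : (⟨0, by omega⟩ : Fin (m+3)) ≠ ⟨2, by omega⟩ := by simp [Fin.ext_iff]
  have hne12 : (⟨1, by omega⟩ : Fin (m+3)) ≠ ⟨2, by omega⟩ := by simp [Fin.ext_iff]
  -- Independence
  have hindep : IsIndepFinset (Q (m+3)) I := by
    intro u hu v hv hadj
    obtain ⟨i, rfl⟩ := hadj
    obtain ⟨hu1, hu2⟩ := (memI u).mp hu
    obtain ⟨hv1, hv2⟩ := (memI _).mp hv
    have hparv : par (u + Pi.single i 1) = par u + 1 := by
      rw [par_add', par_single']
    simp only [Pi.add_apply] at hv1 hv2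
    by_cases hi0 : (⟨0, by omega⟩ : Fin (m+3)) = i
    · subst hi0
      rw [Pi.single_eq_same, Pi.single_eq_of_ne hne01.symm, add_zero, hu1] at hv1
      exact (by decide : ∀ a : ZMod 2, ¬ a + 1 = a) _ hv1
    · by_cases hi1 : (⟨1, by omega⟩ : Fin (m+3)) = i
      · subst hi1
        rw [Pi.single_eq_of_ne hne01, Pi.single_eq_same, hu1] at hv1
        exact (by decide : ∀ a : ZMod 2, ¬ a + 0 = a + 1) _ hv1
      · rw [Pi.single_eq_of_ne hi0, add_zero, hparv, hu2] at hv2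
        exact (by decide : ∀ a : ZMod 2, ¬ a = a + 1) _ hv2
  have hcard : I.card = 2 ^ (m+1) := by
    have := Finset.card_nbij' (s := I) (t := (Finset.univ : Finset (Fin (m+1) → ZMod 2)))
      (fun v j => v j.succ.succ) (extFun m)
      (fun v _ => Finset.mem_univ _)
      (fun t _ => by
        refine (memI' _).mpr ⟨?_, ?_⟩ <;>
        · rw [extFun_lt _ _ (by simp)]
          exact Finset.sum_congr rfl fun j _ => (extFun_tail t j).symm)
      (fun v hv => by
        obtain ⟨h1, h2⟩ := (memI' v).mp hv
        funext k
        by_cases hk : 2 ≤ k.val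
        · rw [show k = ((⟨k.val - 2, by have := k.isLt; omega⟩ : Fin (m+1)).succ.succ) from
            by ext; simp [Fin.val_succ]; omega]
          rw [extFun_tail]
        · rw [extFun_lt _ _ (by omega)]
          rcases (by omega : k.val = 0 ∨ k.val = 1) with h | h
          · rw [show k = (⟨0, by omega⟩ : Fin (m+3)) from Fin.ext h]
            exact h1.symm
          · rw [show k = (⟨1, by omega⟩ : Fin (m+3)) from Fin.ext h]
            exact h2.symm)
      (fun t _ => funext fun j => extFun_tail t j)
    rw [this]
    simp [ZMod.card]
  -- the halving involution
  set d : Fin (m+3) → ZMod 2 :=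
    Pi.single ⟨0, by omega⟩ 1 + Pi.single ⟨1, by omega⟩ 1 + Pi.single ⟨2, by omega⟩ 1 with hd
  have hd0 : d ⟨0, by omega⟩ = 1 := by
    simp [hd, Pi.single_apply, Fin.ext_iff]
  have hd1 : d ⟨1, by omega⟩ = 1 := by
    simp [hd, Pi.single_apply, Fin.ext_iff]
  have hpard : par d = 1 := by
    rw [hd, par_add', par_add', par_single', par_single', par_single']
    decide
  have hdd : ∀ v : Fin (m+3) → ZMod 2, v + d + d = v := by
    intro v
    funext j
    exact (by decide : ∀ a b : ZMod 2, a + b + b = a) (v j) (d j)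
  have hmemd : ∀ v ∈ I, v + d ∈ I ∧ par (v + d) = par v + 1 := by
    intro v hv
    obtain ⟨h1, h2⟩ := (memI v).mp hv
    have hp : par (v + d) = par v + 1 := by rw [par_add', hpard]
    refine ⟨(memI _).mpr ⟨?_, ?_⟩, hp⟩
    · simp only [Pi.add_apply, hd0, hd1, h1]
    · simp only [Pi.add_apply, hd0, hp, h2]
  have heq : (I.filter fun v => par v = 0).card = (I.filter fun v => par v = 1).card := by
    refine Finset.card_nbij' (fun v => v + d) (fun v => v + d) ?_ ?_ ?_ ?_
    · intro v hv
      obtain ⟨hvI, hv0⟩ := Finset.mem_filter.mp hv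
      obtain ⟨h1, h2⟩ := hmemd v hvI
      exact Finset.mem_filter.mpr ⟨h1, by rw [h2, hv0]; decide⟩
    · intro v hv
      obtain ⟨hvI, hv0⟩ := Finset.mem_filter.mp hv
      obtain ⟨h1, h2⟩ := hmemd v hvI
      refine Finset.mem_filter.mpr ⟨h1, by rw [h2, hv0]; decide⟩
    · intro v _; exact hdd v
    · intro v _; exact hdd v
  have hsum : (I.filter fun v => par v = 0).card + (I.filter fun v => par v = 1).card
      = I.card := by
    rw [← Finset.card_filter_add_card_filter_not (s := I) (p := fun v => par v = 0)]
    congr 2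
    apply Finset.filter_congr
    intro v _
    exact (by decide : ∀ a : ZMod 2, a = 1 ↔ ¬ a = 0) _
  have hpow : (2:ℕ) ^ (m+1) = 2 * 2 ^ m := by ring
  refine ⟨hindep, ?_, ?_, ?_, ?_⟩
  · -- maximality
    intro T hT hsub
    refine Finset.Subset.antisymm (fun w hw => ?_) hsub
    by_contra hwI
    have negdec : ∀ a b : ZMod 2, a ≠ b → a = b + 1 := by decide
    have hparw : ∀ i : Fin (m+3), par (w + Pi.single i 1) = par w + 1 := by
      intro i; rw [par_add', par_single']
    -- choose a flip coordinate
    have : ∃ i : Fin (m+3), (w + Pi.single i 1) ∈ I := by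
      by_cases hc : w ⟨0, by omega⟩ = w ⟨1, by omega⟩
      · have h2 : w ⟨0, by omega⟩ ≠ par w := fun h => hwI ((memI w).mpr ⟨hc, h⟩)
        refine ⟨⟨2, by omega⟩, (memI _).mpr ⟨?_, ?_⟩⟩
        · simp only [Pi.add_apply, Pi.single_eq_of_ne hne02, Pi.single_eq_of_ne hne12,
            add_zero]
          exact hc
        · simp only [Pi.add_apply, Pi.single_eq_of_ne hne02, add_zero, hparw]
          rw [negdec _ _ h2]
      · by_cases hp : w ⟨0, by omega⟩ = par w
        · refine ⟨⟨0, by omega⟩, (memI _).mpr ⟨?_, ?_⟩⟩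
          · simp only [Pi.add_apply, Pi.single_eq_same, Pi.single_eq_of_ne hne01.symm,
              add_zero]
            rw [negdec _ _ (Ne.symm hc)]
          · simp only [Pi.add_apply, Pi.single_eq_same, hparw, hp]
        · refine ⟨⟨1, by omega⟩, (memI _).mpr ⟨?_, ?_⟩⟩
          · simp only [Pi.add_apply, Pi.single_eq_of_ne hne01, Pi.single_eq_same, add_zero,
              hparw]
            rw [negdec _ _ hc]
          · simp only [Pi.add_apply, Pi.single_eq_of_ne hne01, add_zero, hparw]
            rw [negdec _ _ hp]
    obtain ⟨i, hiI⟩ := this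
    exact hT w hw _ (hsub hiI) ⟨i, rfl⟩
  · exact hcard
  · show _ = 2 ^ m
    omega
  · show _ = 2 ^ m
    omega
end

section
/- Let V₀ and V₁ be finite types and let G be a simple graph on V₀ ⊕ V₁ in which every edge joins a vertex of V₀ to a vertex of V₁ (G is bipartite with classes V₀, V₁). Define the graph G' whose vertex set is the set of pairs (v₀, v₁) ∈ V₀ × V₁ that are NOT adjacent in G, two distinct pairs (v₀, v₁) and (v₀', v₁') being adjacent in G' if and only if v₀ = v₀', or v₁ = v₁', or v₀ is adjacent to v₁' in G, or v₁ is adjacent to v₀' in G. Then the maximum cardinality of an independent set of G containing equally many vertices of V₀ and V₁ equals twice the independence number of G': α_=(G) = 2·α(G'). -/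
/-- The independence number of a graph on a finite vertex type. -/
noncomputable def indepNum' {V : Type*} (G : SimpleGraph V) : ℕ :=
  sSup {k : ℕ | ∃ S : Finset V, IsIndepFinset G S ∧ S.card = k}

/-- The equi-independence number of a graph on `V₀ ⊕ V₁`: the maximum cardinality of an
independent set containing equally many vertices of `V₀` and of `V₁`. -/
noncomputable def equiIndepNumBip {V₀ V₁ : Type*} (G : SimpleGraph (V₀ ⊕ V₁)) : ℕ :=
  sSup {k : ℕ | ∃ S : Finset (V₀ ⊕ V₁), IsIndepFinset G S ∧
    (S.filter fun v => v.isLeft = true).card = (S.filter fun v => v.isRight = true).card ∧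
    S.card = k}

/-- The auxiliary graph `G'`: vertices are the non-adjacent pairs `(v₀, v₁) ∈ V₀ × V₁`;
two distinct pairs are adjacent iff they share a first or second coordinate, or one side of
one pair is `G`-adjacent to the other side of the other pair. -/
def auxGraph {V₀ V₁ : Type*} (G : SimpleGraph (V₀ ⊕ V₁)) :
    SimpleGraph {p : V₀ × V₁ // ¬ G.Adj (Sum.inl p.1) (Sum.inr p.2)} where
  Adj p q := p ≠ q ∧ (p.1.1 = q.1.1 ∨ p.1.2 = q.1.2 ∨
    G.Adj (Sum.inl p.1.1) (Sum.inr q.1.2) ∨ G.Adj (Sum.inl q.1.1) (Sum.inr p.1.2))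
  symm := by
    constructor
    rintro p q ⟨hne, hc⟩
    refine ⟨hne.symm, ?_⟩
    rcases hc with hc | hc | hc | hc
    · exact Or.inl hc.symm
    · exact Or.inr (Or.inl hc.symm)
    · exact Or.inr (Or.inr (Or.inr hc))
    · exact Or.inr (Or.inr (Or.inl hc))
  loopless := by
    constructor
    rintro p ⟨hne, -⟩
    exact hne rfl

lemma card_filter_isLeft {V₀ V₁ : Type*} (S : Finset (V₀ ⊕ V₁)) :
    (S.filter fun v => v.isLeft = true).card = S.toLeft.card := by
  rw [show S.filter (fun v => v.isLeft = true)
      = S.toLeft.map ⟨Sum.inl, Sum.inl_injective⟩ by ext x; cases x <;> simp,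
    Finset.card_map]

lemma card_filter_isRight {V₀ V₁ : Type*} (S : Finset (V₀ ⊕ V₁)) :
    (S.filter fun v => v.isRight = true).card = S.toRight.card := by
  rw [show S.filter (fun v => v.isRight = true)
      = S.toRight.map ⟨Sum.inr, Sum.inr_injective⟩ by ext x; cases x <;> simp,
    Finset.card_map]

lemma aux_forward {V₀ V₁ : Type*} (G : SimpleGraph (V₀ ⊕ V₁))
    (hbip₀ : ∀ a b : V₀, ¬ G.Adj (Sum.inl a) (Sum.inl b))
    (hbip₁ : ∀ a b : V₁, ¬ G.Adj (Sum.inr a) (Sum.inr b))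
    (T : Finset {p : V₀ × V₁ // ¬ G.Adj (Sum.inl p.1) (Sum.inr p.2)})
    (hT : IsIndepFinset (auxGraph G) T) :
    ∃ S : Finset (V₀ ⊕ V₁), IsIndepFinset G S ∧
      (S.filter fun v => v.isLeft = true).card = (S.filter fun v => v.isRight = true).card ∧
      S.card = 2 * T.card := by
  classical
  have hkey : ∀ p ∈ T, ∀ q ∈ T, p ≠ q →
      p.1.1 ≠ q.1.1 ∧ p.1.2 ≠ q.1.2 ∧ ¬ G.Adj (Sum.inl p.1.1) (Sum.inr q.1.2) ∧
      ¬ G.Adj (Sum.inl q.1.1) (Sum.inr p.1.2) := by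
    intro p hp q hq hpq
    have h := hT p hp q hq
    simp only [auxGraph, not_and, not_or] at h
    exact h hpq
  set SL : Finset (V₀ ⊕ V₁) := T.image (fun p => Sum.inl p.1.1) with hSL
  set SR : Finset (V₀ ⊕ V₁) := T.image (fun p => Sum.inr p.1.2) with hSR
  have hinjL : Set.InjOn (fun p : {p : V₀ × V₁ // ¬ G.Adj (Sum.inl p.1) (Sum.inr p.2)} =>
      (Sum.inl p.1.1 : V₀ ⊕ V₁)) T := by
    intro p hp q hq h
    by_contra hne
    exact (hkey p hp q hq hne).1 (Sum.inl_injective h)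
  have hinjR : Set.InjOn (fun p : {p : V₀ × V₁ // ¬ G.Adj (Sum.inl p.1) (Sum.inr p.2)} =>
      (Sum.inr p.1.2 : V₀ ⊕ V₁)) T := by
    intro p hp q hq h
    by_contra hne
    exact (hkey p hp q hq hne).2.1 (Sum.inr_injective h)
  refine ⟨SL ∪ SR, ?_, ?_, ?_⟩
  · intro u hu v hv hadj
    rcases Finset.mem_union.1 hu with hu | hu <;> rcases Finset.mem_union.1 hv with hv | hv <;>
      obtain ⟨p, hp, rfl⟩ := Finset.mem_image.1 hu <;> obtain ⟨q, hq, rfl⟩ := Finset.mem_image.1 hv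
    · exact hbip₀ _ _ hadj
    · by_cases hpq : p = q
      · subst hpq; exact p.2 hadj
      · exact (hkey p hp q hq hpq).2.2.1 hadj
    · by_cases hpq : q = p
      · subst hpq; exact q.2 hadj.symm
      · exact (hkey q hq p hp hpq).2.2.1 hadj.symm
    · exact hbip₁ _ _ hadj
  · have hfl : (SL ∪ SR).filter (fun v => v.isLeft = true) = SL := by
      rw [Finset.filter_union, Finset.filter_true_of_mem, Finset.filter_false_of_mem,
        Finset.union_empty]
      · intro x hx; obtain ⟨p, hp, rfl⟩ := Finset.mem_image.1 hx; simp
      · intro x hx; obtain ⟨p, hp, rfl⟩ := Finset.mem_image.1 hx; simp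
    have hfr : (SL ∪ SR).filter (fun v => v.isRight = true) = SR := by
      rw [Finset.filter_union, Finset.filter_false_of_mem, Finset.filter_true_of_mem,
        Finset.empty_union]
      · intro x hx; obtain ⟨p, hp, rfl⟩ := Finset.mem_image.1 hx; simp
      · intro x hx; obtain ⟨p, hp, rfl⟩ := Finset.mem_image.1 hx; simp
    rw [hfl, hfr, Finset.card_image_of_injOn hinjL, Finset.card_image_of_injOn hinjR]
  · have hdisj : Disjoint SL SR := by
      rw [Finset.disjoint_left]
      rintro x hx hx'
      obtain ⟨p, hp, rfl⟩ := Finset.mem_image.1 hx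
      obtain ⟨q, hq, h⟩ := Finset.mem_image.1 hx'
      exact Sum.inr_ne_inl h
    rw [Finset.card_union_of_disjoint hdisj, Finset.card_image_of_injOn hinjL,
      Finset.card_image_of_injOn hinjR, two_mul]

lemma aux_backward {V₀ V₁ : Type*} (G : SimpleGraph (V₀ ⊕ V₁))
    (S : Finset (V₀ ⊕ V₁)) (hS : IsIndepFinset G S)
    (hc : (S.filter fun v => v.isLeft = true).card = (S.filter fun v => v.isRight = true).card) :
    ∃ T : Finset {p : V₀ × V₁ // ¬ G.Adj (Sum.inl p.1) (Sum.inr p.2)},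
      IsIndepFinset (auxGraph G) T ∧ S.card = 2 * T.card := by
  classical
  rw [card_filter_isLeft, card_filter_isRight] at hc
  set e := Finset.equivOfCardEq hc with he
  have hmemL : ∀ a : S.toLeft, (Sum.inl a.1 : V₀ ⊕ V₁) ∈ S := fun a =>
    Finset.mem_toLeft.1 a.2
  have hmemR : ∀ a : S.toLeft, (Sum.inr (e a).1 : V₀ ⊕ V₁) ∈ S := fun a =>
    Finset.mem_toRight.1 (e a).2
  set f : S.toLeft → {p : V₀ × V₁ // ¬ G.Adj (Sum.inl p.1) (Sum.inr p.2)} :=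
    fun a => ⟨(a.1, (e a).1), hS _ (hmemL a) _ (hmemR a)⟩ with hf
  have hfinj : Function.Injective f := by
    intro a a' h
    simp only [hf, Subtype.mk.injEq, Prod.mk.injEq] at h
    exact Subtype.ext h.1
  refine ⟨S.toLeft.attach.image (fun a => f a), ?_, ?_⟩
  · intro p hp q hq hadj
    obtain ⟨a, -, rfl⟩ := Finset.mem_image.1 hp
    obtain ⟨a', -, rfl⟩ := Finset.mem_image.1 hq
    obtain ⟨hne, hd⟩ := hadj
    have haa : a ≠ a' := fun h => hne (by rw [h])
    rcases hd with h | h | h | h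
    · exact haa (Subtype.ext h)
    · exact haa (e.injective (Subtype.ext h))
    · exact hS _ (hmemL a) _ (hmemR a') h
    · exact hS _ (hmemL a') _ (hmemR a) h
  · have h2 : S.toLeft.card + S.toRight.card = S.card :=
      Finset.card_toLeft_add_card_toRight
    rw [Finset.card_image_of_injective _ hfinj, Finset.card_attach]
    omega

theorem equiIndepNum_eq_two_mul_indepNum {V₀ V₁ : Type*} [Fintype V₀] [Fintype V₁]
    (G : SimpleGraph (V₀ ⊕ V₁))
    (hbip₀ : ∀ a b : V₀, ¬ G.Adj (Sum.inl a) (Sum.inl b))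
    (hbip₁ : ∀ a b : V₁, ¬ G.Adj (Sum.inr a) (Sum.inr b)) :
    equiIndepNumBip G = 2 * indepNum' (auxGraph G) := by
  classical
  haveI : Fintype {p : V₀ × V₁ // ¬ G.Adj (Sum.inl p.1) (Sum.inr p.2)} :=
    Fintype.ofFinite _
  set A := {k : ℕ | ∃ S : Finset (V₀ ⊕ V₁), IsIndepFinset G S ∧
    (S.filter fun v => v.isLeft = true).card = (S.filter fun v => v.isRight = true).card ∧
    S.card = k} with hA
  set B := {k : ℕ | ∃ S : Finset {p : V₀ × V₁ // ¬ G.Adj (Sum.inl p.1) (Sum.inr p.2)},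
    IsIndepFinset (auxGraph G) S ∧ S.card = k} with hB
  have hAne : A.Nonempty := ⟨0, ∅, by simp [IsIndepFinset]⟩
  have hBne : B.Nonempty := ⟨0, ∅, by simp [IsIndepFinset]⟩
  have hAbdd : BddAbove A := by
    refine ⟨Fintype.card (V₀ ⊕ V₁), ?_⟩
    rintro k ⟨S, -, -, rfl⟩
    exact Finset.card_le_univ S
  have hBbdd : BddAbove B := by
    refine ⟨Fintype.card {p : V₀ × V₁ // ¬ G.Adj (Sum.inl p.1) (Sum.inr p.2)}, ?_⟩
    rintro k ⟨S, -, rfl⟩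
    exact Finset.card_le_univ S
  have hEq : equiIndepNumBip G = sSup A := rfl
  have hIq : indepNum' (auxGraph G) = sSup B := rfl
  rw [hEq, hIq]
  apply le_antisymm
  · apply csSup_le hAne
    rintro k ⟨S, hSind, hSc, rfl⟩
    obtain ⟨T, hTind, hST⟩ := aux_backward G S hSind hSc
    rw [hST]
    have : T.card ≤ sSup B := le_csSup hBbdd ⟨T, hTind, rfl⟩
    omega
  · have hmem : sSup B ∈ B := Nat.sSup_mem hBne hBbdd
    obtain ⟨T, hTind, hTc⟩ := hmem
    obtain ⟨S, hSind, hSc, hScard⟩ := aux_forward G hbip₀ hbip₁ T hTind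
    exact le_csSup hAbdd ⟨S, hSind, hSc, by rw [hScard, hTc]⟩
end

section
/- The equi-independence number of the 5-dimensional hypercube equals 10: α_=(Q_5) = 10. That is, the maximum cardinality of an independent set of Q_5 containing equally many even-parity and odd-parity vertices is 10. -/
instance : DecidableRel (Q 5).Adj := fun u v =>
  inferInstanceAs (Decidable (∃ i : Fin 5, v = u + Pi.single i 1))

def enc (v : Fin 5 → ZMod 2) : ℕ :=
  (v 0).val + 2*(v 1).val + 4*(v 2).val + 8*(v 3).val + 16*(v 4).val

def decV (m : ℕ) : Fin 5 → ZMod 2 := fun i => ((m / 2 ^ (i : ℕ)) % 2 : ℕ)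

def parN (m : ℕ) : ℕ := (m % 2 + m/2 % 2 + m/4 % 2 + m/8 % 2 + m/16 % 2) % 2

def adjN (u w : ℕ) : Prop :=
  u ^^^ w = 1 ∨ u ^^^ w = 2 ∨ u ^^^ w = 4 ∨ u ^^^ w = 8 ∨ u ^^^ w = 16

instance (u w : ℕ) : Decidable (adjN u w) := inferInstanceAs (Decidable (_ ∨ _))

def evT : Fin 16 → ℕ := ![0,3,5,6,9,10,12,15,17,18,20,23,24,27,29,30]

def invT (m : ℕ) : Fin 16 :=
  match m with
  | 0 => 0 | 3 => 1 | 5 => 2 | 6 => 3 | 9 => 4 | 10 => 5 | 12 => 6 | 15 => 7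
  | 17 => 8 | 18 => 9 | 20 => 10 | 23 => 11 | 24 => 12 | 27 => 13 | 29 => 14
  | 30 => 15 | _ => 0

set_option maxHeartbeats 4000000 in
lemma keyN : ∀ a b c d : Fin 16, a < b → b < c → c < d →
    ((Finset.range 32).filter (fun w => parN w = 1 ∧ ¬ adjN (evT a) w ∧
      ¬ adjN (evT b) w ∧ ¬ adjN (evT c) w ∧ ¬ adjN (evT d) w)).card ≤ 5 := by decide

lemma hdecenc : ∀ v : Fin 5 → ZMod 2, decV (enc v) = v := by decide
lemma henc_lt : ∀ v : Fin 5 → ZMod 2, enc v < 32 := by decide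
lemma hpar1 : ∀ v : Fin 5 → ZMod 2, par v = 1 → parN (enc v) = 1 := by decide
lemma hinv : ∀ v : Fin 5 → ZMod 2, par v = 0 → evT (invT (enc v)) = enc v := by decide
set_option maxHeartbeats 4000000 in
lemma hadj : ∀ u v : Fin 5 → ZMod 2, (Q 5).Adj u v ↔ adjN (enc u) (enc v) := by decide

lemma enc_inj : Function.Injective enc :=
  Function.LeftInverse.injective hdecenc

def S10 : Finset (Fin 5 → ZMod 2) :=
  {![0,0,0,0,0], ![1,1,0,0,0], ![1,0,1,0,0], ![1,0,0,1,0], ![1,0,0,0,1],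
   ![0,1,1,1,0], ![0,1,1,0,1], ![0,1,0,1,1], ![0,0,1,1,1], ![1,1,1,1,1]}

lemma S10_indep : ∀ u ∈ S10, ∀ v ∈ S10, ¬ (Q 5).Adj u v := by decide
lemma S10_bal : (S10.filter fun v => par v = 0).card
    = (S10.filter fun v => par v = 1).card := by decide
lemma S10_card : S10.card = 10 := by decide

lemma upper : ∀ S : Finset (Fin 5 → ZMod 2), IsIndepFinset (Q 5) S →
    (S.filter fun v => par v = 0).card = (S.filter fun v => par v = 1).card →
    S.card ≤ 10 := by
  intro S hind hbal
  by_contra h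
  push_neg at h
  set E := S.filter (fun v => par v = 0) with hE
  set O := S.filter (fun v => par v = 1) with hO
  have hsplit : E.card + O.card = S.card := by
    have h1 := Finset.card_filter_add_card_filter_not (s := S) (p := fun v => par v = 0)
    have h2 : S.filter (fun a => ¬ par a = 0) = O := by
      rw [hO]
      apply Finset.filter_congr
      intro x _
      have : ∀ a : ZMod 2, (¬ a = 0) ↔ a = 1 := by decide
      simp [this (par x)]
    rw [h2] at h1
    exact h1
  have hO6 : 6 ≤ O.card := by omega
  have hE6 : 6 ≤ E.card := by omega
  obtain ⟨A, hAE, hA4⟩ := Finset.exists_subset_card_eq (s := E) (n := 4) (by omega)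
  have hApar : ∀ v ∈ A, par v = 0 := fun v hv => (Finset.mem_filter.mp (hAE hv)).2
  have hAS : ∀ v ∈ A, v ∈ S := fun v hv => (Finset.mem_filter.mp (hAE hv)).1
  set A' := A.image (fun v => invT (enc v)) with hA'
  have hA'card : A'.card = 4 := by
    rw [hA', Finset.card_image_of_injOn, hA4]
    intro u hu v hv huv
    have h1 : evT (invT (enc u)) = evT (invT (enc v)) := congrArg evT huv
    rw [hinv u (hApar u hu), hinv v (hApar v hv)] at h1
    exact enc_inj h1
  have hlen : (A'.sort (· ≤ ·)).length = 4 := by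
    rw [Finset.length_sort, hA'card]
  obtain ⟨a, b, c, d, hL⟩ : ∃ a b c d, A'.sort (· ≤ ·) = [a, b, c, d] := by
    rcases hll : A'.sort (· ≤ ·) with _ | ⟨a, _ | ⟨b, _ | ⟨c, _ | ⟨d, _ | e⟩⟩⟩⟩ <;>
      simp [hll] at hlen <;> exact ⟨a, b, c, d, rfl⟩
  have hsorted := (Finset.sortedLT_sort A').pairwise
  rw [hL] at hsorted
  simp [List.pairwise_cons] at hsorted
  obtain ⟨⟨hab, -, -⟩, ⟨hbc, -⟩, hcd⟩ := hsorted
  -- membership facts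
  have hmem : ∀ x ∈ [a,b,c,d], ∃ v ∈ A, evT x = enc v := by
    intro x hx
    have : x ∈ A' := by
      rw [← Finset.mem_sort (· ≤ ·), hL]; exact hx
    obtain ⟨v, hv, hvx⟩ := Finset.mem_image.mp this
    exact ⟨v, hv, by rw [← hvx, hinv v (hApar v hv)]⟩
  have hsub : O.image enc ⊆ (Finset.range 32).filter (fun w => parN w = 1 ∧
      ¬ adjN (evT a) w ∧ ¬ adjN (evT b) w ∧ ¬ adjN (evT c) w ∧ ¬ adjN (evT d) w) := by
    intro m hm
    obtain ⟨w, hwO, rfl⟩ := Finset.mem_image.mp hm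
    have hwS : w ∈ S := (Finset.mem_filter.mp hwO).1
    have hwp : par w = 1 := (Finset.mem_filter.mp hwO).2
    have key : ∀ x ∈ [a,b,c,d], ¬ adjN (evT x) (enc w) := by
      intro x hx
      obtain ⟨v, hvA, hvx⟩ := hmem x hx
      rw [hvx]
      exact fun hc => hind v (hAS v hvA) w hwS ((hadj v w).mpr hc)
    refine Finset.mem_filter.mpr ⟨Finset.mem_range.mpr (henc_lt w), hpar1 w hwp,
      key a (by simp), key b (by simp), key c (by simp), key d (by simp)⟩
  have hcard : O.card ≤ 5 := by
    calc O.card = (O.image enc).card := (Finset.card_image_of_injective O enc_inj).symm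
    _ ≤ _ := Finset.card_le_card hsub
    _ ≤ 5 := keyN a b c d hab hbc hcd
  omega

theorem equiIndepNum_Q5 : equiIndepNum 5 = 10 := by
  have hmem : 10 ∈ {k : ℕ | ∃ S : Finset (Fin 5 → ZMod 2), IsIndepFinset (Q 5) S ∧
      (S.filter fun v => par v = 0).card = (S.filter fun v => par v = 1).card ∧
      S.card = k} := ⟨S10, S10_indep, S10_bal, S10_card⟩
  have hub : ∀ n ∈ {k : ℕ | ∃ S : Finset (Fin 5 → ZMod 2), IsIndepFinset (Q 5) S ∧
      (S.filter fun v => par v = 0).card = (S.filter fun v => par v = 1).card ∧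
      S.card = k}, n ≤ 10 := by
    rintro n ⟨S, hind, hbal, rfl⟩
    exact upper S hind hbal
  exact le_antisymm (csSup_le ⟨10, hmem⟩ hub) (le_csSup ⟨10, hub⟩ hmem)
end
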